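/- Let p be an integer-valued supermodular set-function on the subsets of a nonempty finite set S with p(∅) = 0, assume Ḃ(p) is nonempty, and let Φ : ℤ^S → ℝ be a symmetric convex function. Then every decreasingly minimal element m of Ḃ(p) minimizes Φ over Ḃ(p); that is, Φ(m) ≤ Φ(y) for every y ∈ Ḃ(p). -/

import Mathlib

open Finset

variable {α : Type*}

/-- Integer-valued supermodular set-function. -/
def Supermodular [DecidableEq α] (p : Finset α → ℤ) : Prop :=
  ∀ X Y : Finset α, p X + p Y ≤ p (X ∩ Y) + p (X ∪ Y)

/-- The M-convex set `Ḃ(p)` of integral elements of the base-polyhedron `B'(p)`: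
all `m : α → ℤ` with `m̃(X) ≥ p(X)` for every `X` and `m̃(S) = p(S)`. -/
def Bdot [Fintype α] (p : Finset α → ℤ) : Set (α → ℤ) :=
  {m | (∀ X : Finset α, p X ≤ ∑ s ∈ X, m s) ∧ (∑ s, m s) = p Finset.univ}

/-- `x↓`: the values of `x` arranged in nonincreasing order. -/
def sortedDesc [Fintype α] (x : α → ℤ) : List ℤ :=
  ((Finset.univ.val.map x).sort (· ≤ ·)).reverse

/-- `x↑`: the values of `x` arranged in nondecreasing order. -/
def sortedAsc [Fintype α] (x : α → ℤ) : List ℤ :=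
  (Finset.univ.val.map x).sort (· ≤ ·)

/-- `x ≤_dec y`: `x↓` is lexicographically less than or equal to `y↓`. -/
def DecLE [Fintype α] (x y : α → ℤ) : Prop :=
  sortedDesc x = sortedDesc y ∨ List.Lex (· < ·) (sortedDesc x) (sortedDesc y)

/-- `x ≤_inc y`: `x↑` is lexicographically less than or equal to `y↑`. -/
def IncLE [Fintype α] (x y : α → ℤ) : Prop :=
  sortedAsc x = sortedAsc y ∨ List.Lex (· < ·) (sortedAsc x) (sortedAsc y)

/-- `m` is a decreasingly minimal element of `Bdot p`. -/
def DecMin [Fintype α] (p : Finset α → ℤ) (m : α → ℤ) : Prop :=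
  m ∈ Bdot p ∧ ∀ y ∈ Bdot p, DecLE m y

/-! ### Auxiliary lemmas -/

/-- Key lexicographic lemma: if two sorted (nonincreasing) lists of equal length agree on
counts of all values above `a` and the first has strictly fewer copies of `a`, then the
first is lexicographically smaller. -/
lemma lexTop : ∀ (l l' : List ℤ), l'.Pairwise (· ≥ ·) → l.Pairwise (· ≥ ·) →
    l'.length = l.length → ∀ a : ℤ, l'.count a < l.count a →
    (∀ c, a < c → l'.count c = l.count c) → List.Lex (· < ·) l' l := by
  intro l
  induction l with
  | nil => intro l' _ _ _ a hc _; simp at hc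
  | cons b L ih =>
    intro l' hs' hs hlen a hc habove
    cases l' with
    | nil => simp at hlen
    | cons b' L' =>
      have hballL : ∀ x ∈ L, x ≤ b := fun x hx => (List.pairwise_cons.1 hs).1 x hx
      have hballL' : ∀ x ∈ L', x ≤ b' := fun x hx => (List.pairwise_cons.1 hs').1 x hx
      have hb'b : b' ≤ b := by
        by_contra hlt
        push_neg at hlt
        by_cases hba : a < b'
        · have h1 : (b' :: L').count b' ≥ 1 := by simp [List.count_cons]
          have h2 : (b :: L).count b' = 0 := by
            rw [List.count_eq_zero]
            intro hmem
            rcases List.mem_cons.1 hmem with h | h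
            · omega
            · have := hballL _ h; omega
          have := habove b' hba
          omega
        · push_neg at hba
          have h2 : (b :: L).count a = 0 := by
            rw [List.count_eq_zero]
            intro hmem
            rcases List.mem_cons.1 hmem with h | h
            · omega
            · have := hballL _ h; omega
          omega
      rcases lt_or_eq_of_le hb'b with hlt | heq
      · exact List.Lex.rel hlt
      · subst heq
        apply List.Lex.cons
        apply ih L' hs'.of_cons hs.of_cons (by simpa using hlen) a
        · by_cases hba : b' = a
          · subst hba
            have h1 : (b' :: L').count b' = L'.count b' + 1 := by simp [List.count_cons]
            have h2 : (b' :: L).count b' = L.count b' + 1 := by simp [List.count_cons]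
            omega
          · have h1 : (b' :: L').count a = L'.count a := by simp [List.count_cons, hba]
            have h2 : (b' :: L).count a = L.count a := by simp [List.count_cons, hba]
            omega
        · intro c hac
          have := habove c hac
          by_cases hbc : b' = c <;> simp [List.count_cons, hbc] at this ⊢ <;> omega

lemma sortedDesc_sorted [Fintype α] (x : α → ℤ) : (sortedDesc x).Pairwise (· ≥ ·) := by
  have := Multiset.pairwise_sort (Finset.univ.val.map x) (· ≤ ·)
  unfold sortedDesc
  exact List.pairwise_reverse.2 this

lemma count_sortedDesc [Fintype α] (x : α → ℤ) (c : ℤ) :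
    (sortedDesc x).count c = Multiset.count c (Finset.univ.val.map x) := by
  unfold sortedDesc
  rw [List.count_reverse, ← Multiset.coe_count, Multiset.sort_eq]

lemma length_sortedDesc [Fintype α] (x : α → ℤ) :
    (sortedDesc x).length = Fintype.card α := by
  unfold sortedDesc
  simp [Multiset.length_sort]

lemma map_univ_perm [Fintype α] (σ : Equiv.Perm α) :
    (Finset.univ.val.map (σ : α → α)) = Finset.univ.val := by
  have h : (Finset.univ.map σ.toEmbedding) = Finset.univ := Finset.map_univ_equiv σ
  calc (Finset.univ.val.map (σ : α → α)) = (Finset.univ.map σ.toEmbedding).val := rfl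
    _ = Finset.univ.val := by rw [h]

lemma sortedDesc_comp [Fintype α] (x : α → ℤ) (σ : Equiv.Perm α) :
    sortedDesc (x ∘ σ) = sortedDesc x := by
  unfold sortedDesc
  congr 1
  congr 1
  rw [← Multiset.map_map, map_univ_perm]

/-- Exchange property of the integral base polyhedron of a supermodular function. -/
lemma exchange [Fintype α] [DecidableEq α] (p : Finset α → ℤ) (hp : Supermodular p)
    (m y : α → ℤ) (hm : m ∈ Bdot p) (hy : y ∈ Bdot p) (s : α) (hs : y s < m s) :
    ∃ t, m t < y t ∧
      (fun u => m u + (if u = t then 1 else 0) - (if u = s then 1 else 0)) ∈ Bdot p := by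
  classical
  have tight_inter : ∀ X Y : Finset α, (∑ u ∈ X, m u) = p X → (∑ u ∈ Y, m u) = p Y →
      (∑ u ∈ X ∩ Y, m u) = p (X ∩ Y) := by
    intro X Y hX hY
    have h1 := Finset.sum_union_inter (s₁ := X) (s₂ := Y) (f := m)
    have h2 := hp X Y
    have h3 := hm.1 (X ∩ Y)
    have h4 := hm.1 (X ∪ Y)
    linarith
  set 𝒯 : Finset (Finset α) := Finset.univ.filter (fun X => (∑ u ∈ X, m u) = p X ∧ s ∈ X)
    with h𝒯
  have hinf : ∀ S : Finset (Finset α), (∀ X ∈ S, (∑ u ∈ X, m u) = p X ∧ s ∈ X) →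
      (∑ u ∈ S.inf id, m u) = p (S.inf id) ∧ s ∈ S.inf id := by
    intro S
    induction S using Finset.induction_on with
    | empty =>
      intro _
      simp only [Finset.inf_empty, Finset.top_eq_univ]
      exact ⟨hm.2, Finset.mem_univ s⟩
    | @insert X S' hXS ih =>
      intro hall
      have hXp := hall X (Finset.mem_insert_self X S')
      have hS' := ih (fun Y hY => hall Y (Finset.mem_insert_of_mem hY))
      rw [Finset.inf_insert]
      simp only [id_eq]
      constructor
      · exact tight_inter X (S'.inf id) hXp.1 hS'.1
      · exact Finset.mem_inter.2 ⟨hXp.2, hS'.2⟩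
  set T : Finset α := 𝒯.inf id with hT
  have hTtight : (∑ u ∈ T, m u) = p T ∧ s ∈ T := by
    apply hinf
    intro X hX
    simpa [h𝒯] using hX
  have hexT : ∃ t ∈ T, m t < y t := by
    by_contra hcon
    push_neg at hcon
    have hlt : ∑ u ∈ T, y u < ∑ u ∈ T, m u :=
      Finset.sum_lt_sum (fun i hi => hcon i hi) ⟨s, hTtight.2, hs⟩
    have := hy.1 T
    omega
  obtain ⟨t, htT, hty⟩ := hexT
  refine ⟨t, hty, ?_⟩
  have hsum : ∀ X : Finset α,
      (∑ u ∈ X, (m u + (if u = t then 1 else 0) - (if u = s then 1 else 0)))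
      = (∑ u ∈ X, m u) + (if t ∈ X then 1 else 0) - (if s ∈ X then 1 else 0) := by
    intro X
    rw [Finset.sum_sub_distrib, Finset.sum_add_distrib,
      Finset.sum_ite_eq' X t (fun _ => (1:ℤ)), Finset.sum_ite_eq' X s (fun _ => (1:ℤ))]
  constructor
  · intro X
    rw [hsum X]
    have hX := hm.1 X
    by_cases hsX : s ∈ X
    · by_cases htX : t ∈ X
      · simp only [hsX, htX, if_true]; omega
      · have hnt : (∑ u ∈ X, m u) ≠ p X := by
          intro htight
          have hXT : X ∈ 𝒯 := by simp [h𝒯, htight, hsX]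
          have hsub : T ⊆ X := by
            have := Finset.inf_le (f := id) hXT
            simpa [hT] using this
          exact htX (hsub htT)
        simp only [hsX, htX, if_true, if_false]
        omega
    · by_cases htX : t ∈ X <;> simp only [hsX, htX, if_true, if_false] <;> omega
  · rw [hsum Finset.univ]
    simp [hm.2]

lemma cons_decomp [Fintype α] [DecidableEq α] (s t : α) (hst : s ≠ t) :
    ∃ R : Multiset α, Finset.univ.val = s ::ₘ t ::ₘ R ∧ s ∉ R ∧ t ∉ R := by
  have hnd : (Finset.univ.val : Multiset α).Nodup := Finset.univ.nodup
  have hs : s ∈ (Finset.univ.val : Multiset α) := Finset.mem_univ s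
  have hnd' : ((Finset.univ.val : Multiset α).erase s).Nodup := hnd.erase s
  have ht : t ∈ (Finset.univ.val : Multiset α).erase s :=
    (hnd.mem_erase_iff).2 ⟨hst.symm, Finset.mem_univ t⟩
  refine ⟨((Finset.univ.val : Multiset α).erase s).erase t, ?_, ?_, ?_⟩
  · rw [Multiset.cons_erase ht, Multiset.cons_erase hs]
  · intro hmem
    have : s ∈ (Finset.univ.val : Multiset α).erase s := Multiset.mem_of_mem_erase hmem
    exact (hnd.mem_erase_iff.1 this).1 rfl
  · intro hmem
    exact (hnd'.mem_erase_iff.1 hmem).1 rfl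

lemma sum_split [Fintype α] [DecidableEq α] (f : α → ℕ) (s t : α) (hst : s ≠ t) :
    (∑ v, f v) = f s + f t + ∑ v ∈ (Finset.univ.erase s).erase t, f v := by
  have ht : t ∈ Finset.univ.erase s := Finset.mem_erase.2 ⟨hst.symm, Finset.mem_univ t⟩
  have h1 : f s + ∑ v ∈ Finset.univ.erase s, f v = ∑ v, f v :=
    Finset.add_sum_erase _ f (Finset.mem_univ s)
  have h2 : f t + ∑ v ∈ (Finset.univ.erase s).erase t, f v = ∑ v ∈ Finset.univ.erase s, f v :=
    Finset.add_sum_erase _ f ht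
  omega

/-- Every dec-min element of `Ḃ(p)` minimizes any symmetric convex function
`Φ : ℤ^S → ℝ` over `Ḃ(p)`. -/
theorem stmt11 [Fintype α] [DecidableEq α] [Nonempty α]
    (p : Finset α → ℤ) (hp : Supermodular p) (h0 : p ∅ = 0)
    (hne : (Bdot p).Nonempty)
    (Φ : (α → ℤ) → ℝ)
    (hsym : ∀ (z : α → ℤ) (σ : Equiv.Perm α), Φ (z ∘ σ) = Φ z)
    (hconv : ∀ (x y : α → ℤ) (lam : ℝ), 0 < lam → lam < 1 →
      ∀ w : α → ℤ, (∀ s : α, (w s : ℝ) = lam * (x s : ℝ) + (1 - lam) * (y s : ℝ)) →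
        Φ w ≤ lam * Φ x + (1 - lam) * Φ y)
    (m : α → ℤ) (hm : DecMin p m) :
    ∀ y ∈ Bdot p, Φ m ≤ Φ y := by
  classical
  suffices key : ∀ N : ℕ, ∀ m y : α → ℤ, DecMin p m → y ∈ Bdot p →
      (∑ u, (m u - y u).natAbs) ≤ N → Φ m ≤ Φ y by
    intro y hy
    exact key _ m y hm hy le_rfl
  intro N
  induction N with
  | zero =>
    intro m y hdm hy hd
    have hmy : m = y := by
      funext u
      have h0' : (m u - y u).natAbs = 0 :=
        Finset.sum_eq_zero_iff.1 (Nat.le_zero.1 hd) u (Finset.mem_univ u)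
      omega
    rw [hmy]
  | succ N ih =>
    intro m y hdm hy hd
    by_cases heq : m = y
    · rw [heq]
    · have hne2 : ∃ u, m u ≠ y u := by
        by_contra h; push_neg at h; exact heq (funext h)
      have hsums : (∑ u, m u) = ∑ u, y u := by rw [hdm.1.2, hy.2]
      have hexs : ∃ u, y u < m u := by
        by_contra h; push_neg at h
        obtain ⟨u0, hu0⟩ := hne2
        have : (∑ u, m u) < ∑ u, y u :=
          Finset.sum_lt_sum (fun i _ => h i)
            ⟨u0, Finset.mem_univ u0, lt_of_le_of_ne (h u0) hu0⟩
        omega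
      set F := Finset.univ.filter (fun u => y u < m u) with hF
      have hFne : F.Nonempty := ⟨hexs.choose, by simp [hF, hexs.choose_spec]⟩
      obtain ⟨s, hsF, hsmax⟩ := Finset.exists_max_image F m hFne
      have hs : y s < m s := by simpa [hF] using hsF
      obtain ⟨t, hty, hm'B⟩ := exchange p hp m y hdm.1 hy s hs
      set m' := fun u => m u + (if u = t then 1 else 0) - (if u = s then 1 else 0) with hm'
      have hst : s ≠ t := fun h => by rw [h] at hs; omega
      -- dec-minimality of m forbids m t ≤ m s - 2
      have hnot : ¬ (m t ≤ m s - 2) := by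
        intro hts
        obtain ⟨R, hR, hsR, htR⟩ := cons_decomp s t hst
        have hmapR : Multiset.map m' R = Multiset.map m R := by
          apply Multiset.map_congr rfl
          intro u hu
          have hus : u ≠ s := fun h => hsR (h ▸ hu)
          have hut : u ≠ t := fun h => htR (h ▸ hu)
          simp [hm', hus, hut]
        have hmapm : Multiset.map m Finset.univ.val = m s ::ₘ m t ::ₘ Multiset.map m R := by
          rw [hR]; simp
        have hm's : m' s = m s - 1 := by simp [hm', hst]
        have hm't : m' t = m t + 1 := by simp [hm', hst.symm, Ne.symm hst]
        have hmapm' : Multiset.map m' Finset.univ.val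
            = (m s - 1) ::ₘ (m t + 1) ::ₘ Multiset.map m R := by
          rw [hR]
          simp only [Multiset.map_cons, hmapR, hm's, hm't]
        have hlex : List.Lex (· < ·) (sortedDesc m') (sortedDesc m) := by
          apply lexTop _ _ (sortedDesc_sorted m') (sortedDesc_sorted m)
            (by rw [length_sortedDesc, length_sortedDesc]) (m s)
          · rw [count_sortedDesc, count_sortedDesc, hmapm, hmapm']
            simp only [Multiset.count_cons]
            split_ifs <;> omega
          · intro c hc
            rw [count_sortedDesc, count_sortedDesc, hmapm, hmapm']
            simp only [Multiset.count_cons]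
            split_ifs <;> omega
        rcases hdm.2 m' hm'B with h | h
        · rw [h] at hlex
          exact irrefl_of (List.Lex ((· < ·) : ℤ → ℤ → Prop)) _ hlex
        · exact asymm (r := List.Lex ((· < ·) : ℤ → ℤ → Prop)) h hlex
      by_cases hcase : m t = m s - 1
      · -- m' is the swap of m at s,t; it is dec-min with the same Φ-value
        have hm'eq : m' = m ∘ (Equiv.swap s t) := by
          funext u
          by_cases hu : u = s
          · subst hu
            simp [hm', hst, Equiv.swap_apply_left, hcase]
          · by_cases hu2 : u = t
            · subst hu2
              simp [hm', Ne.symm hst, Equiv.swap_apply_right]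
              omega
            · simp [hm', hu, hu2, Equiv.swap_apply_of_ne_of_ne hu hu2]
        have hdm' : DecMin p m' := by
          refine ⟨hm'B, fun z hz => ?_⟩
          have hsd : sortedDesc m' = sortedDesc m := by
            rw [hm'eq]; exact sortedDesc_comp m _
          unfold DecLE
          rw [hsd]
          exact hdm.2 z hz
        have hΦ : Φ m' = Φ m := by rw [hm'eq]; exact hsym m _
        have hdist : (∑ u, (m' u - y u).natAbs) ≤ N := by
          have hsp1 := sum_split (fun v => (m' v - y v).natAbs) s t hst
          have hsp2 := sum_split (fun v => (m v - y v).natAbs) s t hst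
          have hrest : ∑ v ∈ (Finset.univ.erase s).erase t, (m' v - y v).natAbs
              = ∑ v ∈ (Finset.univ.erase s).erase t, (m v - y v).natAbs := by
            apply Finset.sum_congr rfl
            intro v hv
            have hvt : v ≠ t := (Finset.mem_erase.1 hv).1
            have hvs : v ≠ s := (Finset.mem_erase.1 (Finset.mem_erase.1 hv).2).1
            simp [hm', hvt, hvs]
          have hm's : m' s = m s - 1 := by simp [hm', hst]
          have hm't : m' t = m t + 1 := by simp [hm', Ne.symm hst]
          rw [hm's, hm't, hrest] at hsp1
          omega
        rw [← hΦ]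
        exact ih m' y hdm' hy hdist
      · have htsge : m s ≤ m t := by omega
        obtain ⟨u, huy, hy'B⟩ := exchange p hp y m hy hdm.1 t hty
        set y' := fun v => y v + (if v = u then 1 else 0) - (if v = t then 1 else 0) with hy'
        have huF : u ∈ F := by simp [hF, huy]
        have hums : m u ≤ m s := hsmax u huF
        have hgap : y u + 2 ≤ y t := by omega
        have htu : t ≠ u := by intro h; rw [h] at hty; omega
        have hy't : y' t = y t - 1 := by simp [hy', htu]
        have hy'u : y' u = y u + 1 := by simp [hy', Ne.symm htu]
        -- Φ y' ≤ Φ y by convexity and symmetry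
        have hΦy' : Φ y' ≤ Φ y := by
          set G : ℤ := y t - y u with hG
          have hG2 : (2:ℤ) ≤ G := by omega
          have hGR : (2:ℝ) ≤ (G:ℝ) := by exact_mod_cast hG2
          have hGne : (G:ℝ) ≠ 0 := by linarith
          set lam : ℝ := ((G:ℝ) - 1) / (G:ℝ) with hlam
          have hlam0 : 0 < lam := by
            apply div_pos <;> linarith
          have hlam1 : lam < 1 := by
            rw [hlam, div_lt_one (by linarith)]
            linarith
          have hw : ∀ v : α, (y' v : ℝ)
              = lam * (y v : ℝ) + (1 - lam) * ((y ∘ (Equiv.swap t u)) v : ℝ) := by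
            intro v
            by_cases hvt : v = t
            · rw [hvt, hy't]
              simp only [Function.comp_apply, Equiv.swap_apply_left]
              rw [hlam]
              have : (y u : ℝ) = (y t : ℝ) - (G:ℝ) := by
                rw [hG]; push_cast; ring
              rw [this]
              field_simp
              push_cast
              ring
            · by_cases hvu : v = u
              · rw [hvu, hy'u]
                simp only [Function.comp_apply, Equiv.swap_apply_right]
                rw [hlam]
                have : (y t : ℝ) = (y u : ℝ) + (G:ℝ) := by
                  rw [hG]; push_cast; ring
                rw [this]
                field_simp
                push_cast
                ring
              · have hv : y' v = y v := by simp [hy', hvt, hvu]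
                rw [hv]
                simp only [Function.comp_apply, Equiv.swap_apply_of_ne_of_ne hvt hvu]
                ring
          have := hconv y (y ∘ (Equiv.swap t u)) lam hlam0 hlam1 y' hw
          rw [hsym y (Equiv.swap t u)] at this
          linarith
        have hdist : (∑ v, (m v - y' v).natAbs) ≤ N := by
          have hsp1 := sum_split (fun v => (m v - y' v).natAbs) t u htu
          have hsp2 := sum_split (fun v => (m v - y v).natAbs) t u htu
          have hrest : ∑ v ∈ (Finset.univ.erase t).erase u, (m v - y' v).natAbs
              = ∑ v ∈ (Finset.univ.erase t).erase u, (m v - y v).natAbs := by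
            apply Finset.sum_congr rfl
            intro v hv
            have hvu : v ≠ u := (Finset.mem_erase.1 hv).1
            have hvt : v ≠ t := (Finset.mem_erase.1 (Finset.mem_erase.1 hv).2).1
            simp [hy', hvu, hvt]
          rw [hy't, hy'u, hrest] at hsp1
          omega
        exact le_trans (ih m y' hdm hy'B hdist) hΦy'
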